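/- Fix M, K ∈ ℕ with K ≤ M, bounds 0 < ρ₁ < ρ₂, matrices C_i ∈ ℝ^{p_i×m} defining closed polyhedral cones U_i = {u ∈ ℝ^m : C_i u ≤ 0}, and y ∈ ℝ^m, and let Γ_i = ‖proj_{U_i}(y)‖₂. Let K' = #{i : Γ_i > 0} and K'' = min{K, K'}, and suppose: (i) there is a set S of K'' indices with Γ_i > 0 for all i ∈ S and Γ_i > Γ_j for all i ∈ S and j ∉ S; and (ii) for every j with Γ_j = 0, ⟨y, u⟩ < 0 for every nonzero u ∈ U_j. Then every maximizer (u_i, γ_i, σ_i)_{i=1}^M of Σᵢ ⟨y, u_i⟩ subject to u_i ∈ U_i, ‖u_i‖₂ ≤ σ_i, γ_iρ₁ ≤ σ_i ≤ γ_iρ₂, 0 ≤ γ_i ≤ 1, Σᵢ γ_i ≤ K has control components u_i = (ρ₂/Γ_i)·proj_{U_i}(y) for i ∈ S and u_j = 0 for j ∉ S; in particular at most K controls are nonzero and each nonzero control has norm exactly ρ₂ (bang-bang structure), so the maximizing controls are feasible for the original non-convex input constraints ‖u_i‖₂ ∈ {0} ∪ [ρ₁, ρ₂] with at most K inputs active.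 -/

import Mathlib

open Matrix
open scoped RealInnerProductSpace

/-- Variational facts about the metric projection onto a closed convex cone. -/
lemma proj_cone_facts {E : Type*} [NormedAddCommGroup E] [InnerProductSpace ℝ E]
    (y Pv : E) (U : Set E)
    (hadd : ∀ a b, a ∈ U → b ∈ U → a + b ∈ U)
    (hsmul : ∀ (t : ℝ) a, 0 ≤ t → a ∈ U → t • a ∈ U)
    (hPv : Pv ∈ U)
    (hmin : ∀ z ∈ U, dist y Pv ≤ dist y z) :
    (∀ w ∈ U, ⟪y - Pv, w⟫ ≤ 0) ∧ ⟪y, Pv⟫ = ‖Pv‖ ^ 2 := by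
  have hsq : ∀ z ∈ U, ‖y - Pv‖ ^ 2 ≤ ‖y - z‖ ^ 2 := by
    intro z hz
    have := hmin z hz
    rw [dist_eq_norm, dist_eq_norm] at this
    exact pow_le_pow_left₀ (norm_nonneg _) this 2
  have claim1 : ∀ w ∈ U, ⟪y - Pv, w⟫ ≤ 0 := by
    intro w hw
    by_contra hc
    push_neg at hc
    have hw0 : w ≠ 0 := by
      rintro rfl; simp at hc
    have hnw : (0:ℝ) < ‖w‖ ^ 2 := by
      have := norm_pos_iff.mpr hw0
      positivity
    set c : ℝ := ⟪y - Pv, w⟫ with hcdef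
    set t : ℝ := c / ‖w‖ ^ 2 with htdef
    have ht : 0 < t := div_pos hc hnw
    have hz : Pv + t • w ∈ U := hadd _ _ hPv (hsmul t w ht.le hw)
    have h1 := hsq _ hz
    have hexp : ‖y - (Pv + t • w)‖ ^ 2
        = ‖y - Pv‖ ^ 2 - 2 * (t * c) + t ^ 2 * ‖w‖ ^ 2 := by
      have : y - (Pv + t • w) = (y - Pv) - t • w := by abel
      rw [this, norm_sub_sq_real, real_inner_smul_right, norm_smul,
        Real.norm_eq_abs, mul_pow, sq_abs]
    rw [hexp] at h1
    have h2 : 2 * (t * c) ≤ t ^ 2 * ‖w‖ ^ 2 := by linarith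
    have h3 : t ^ 2 * ‖w‖ ^ 2 = t * c := by
      rw [htdef]; field_simp
    nlinarith
  have claim2a : ⟪y - Pv, Pv⟫ ≤ 0 := claim1 Pv hPv
  have claim2b : 0 ≤ ⟪y - Pv, Pv⟫ := by
    by_contra hc
    push_neg at hc
    have hP0 : Pv ≠ 0 := by
      rintro rfl
      rw [inner_zero_right] at hc
      exact lt_irrefl 0 hc
    set c : ℝ := ⟪y - Pv, Pv⟫ with hcdef
    have hnP : (0:ℝ) < ‖Pv‖ ^ 2 := by
      have := norm_pos_iff.mpr hP0
      positivity
    set ε : ℝ := min 1 (-c / ‖Pv‖ ^ 2) with hε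
    have hε0 : 0 < ε := lt_min one_pos (div_pos (by linarith) hnP)
    have hε1 : ε ≤ 1 := min_le_left _ _
    have hεP : ε * ‖Pv‖ ^ 2 ≤ -c := by
      have : ε ≤ -c / ‖Pv‖ ^ 2 := min_le_right _ _
      calc ε * ‖Pv‖ ^ 2 ≤ (-c / ‖Pv‖ ^ 2) * ‖Pv‖ ^ 2 :=
            mul_le_mul_of_nonneg_right this hnP.le
        _ = -c := by field_simp
    have hz : (1 - ε) • Pv ∈ U := hsmul _ _ (by linarith) hPv
    have h1 := hsq _ hz
    have hexp : ‖y - (1 - ε) • Pv‖ ^ 2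
        = ‖y - Pv‖ ^ 2 + 2 * (ε * c) + ε ^ 2 * ‖Pv‖ ^ 2 := by
      have : y - (1 - ε) • Pv = (y - Pv) + ε • Pv := by
        rw [sub_smul, one_smul]; abel
      rw [this, norm_add_sq_real, real_inner_smul_right, norm_smul,
        Real.norm_eq_abs, mul_pow, sq_abs]
    rw [hexp] at h1
    nlinarith
  have heq : ⟪y - Pv, Pv⟫ = 0 := le_antisymm claim2a claim2b
  refine ⟨claim1, ?_⟩
  have := inner_sub_left (𝕜 := ℝ) y Pv Pv
  rw [heq, real_inner_self_eq_norm_sq] at this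
  linarith [this.symm]

/-- LP bound and equality case. -/
lemma lp_bound {M : ℕ} (K : ℕ) (Γ γ : Fin M → ℝ) (S : Finset (Fin M))
    (hΓ : ∀ i, 0 ≤ Γ i) (hSpos : ∀ i ∈ S, 0 < Γ i)
    (hgap : ∀ i ∈ S, ∀ j ∉ S, Γ j < Γ i)
    (hγ0 : ∀ i, 0 ≤ γ i) (hγ1 : ∀ i, γ i ≤ 1) (hsum : ∑ i, γ i ≤ (K:ℝ))
    (hSK : S.card ≤ K)
    (hout : S.card < K → ∀ j ∉ S, Γ j = 0) :
    (∑ i, Γ i * γ i ≤ ∑ i ∈ S, Γ i) ∧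
    (∑ i, Γ i * γ i = ∑ i ∈ S, Γ i →
      (∀ i ∈ S, γ i = 1) ∧ ∀ j ∉ S, Γ j * γ j = 0) := by
  classical
  have hsplit : ∑ i ∈ S, Γ i * γ i + ∑ i ∈ Sᶜ, Γ i * γ i = ∑ i, Γ i * γ i :=
    Finset.sum_add_sum_compl S _
  have hsplitγ : ∑ i ∈ S, γ i + ∑ i ∈ Sᶜ, γ i = ∑ i, γ i :=
    Finset.sum_add_sum_compl S _
  have hStermle : ∀ i ∈ S, Γ i * γ i ≤ Γ i := fun i hi => by
    nlinarith [hSpos i hi, hγ1 i]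
  have hCnonneg : ∀ i ∈ Sᶜ, 0 ≤ Γ i * γ i := fun i _ =>
    mul_nonneg (hΓ i) (hγ0 i)
  by_cases hall : ∀ j ∉ S, Γ j = 0
  · -- all gains outside S vanish
    have hCzero : ∑ i ∈ Sᶜ, Γ i * γ i = 0 := by
      apply Finset.sum_eq_zero
      intro i hi
      rw [hall i (Finset.mem_compl.mp hi)]; ring
    have hbound : ∑ i, Γ i * γ i ≤ ∑ i ∈ S, Γ i := by
      rw [← hsplit, hCzero, add_zero]
      exact Finset.sum_le_sum hStermle
    refine ⟨hbound, fun heq => ?_⟩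
    have hSeq : ∑ i ∈ S, Γ i * γ i = ∑ i ∈ S, Γ i := by
      rw [← hsplit, hCzero, add_zero] at heq; exact heq
    have := (Finset.sum_eq_sum_iff_of_le hStermle).mp hSeq
    constructor
    · intro i hi
      have h := this i hi
      have := hSpos i hi
      nlinarith
    · intro j hj
      rw [hall j hj]; ring
  · -- some positive gain outside S; then S.card = K
    push_neg at hall
    obtain ⟨j₀, hj₀S, hj₀⟩ := hall
    have hj₀pos : 0 < Γ j₀ := lt_of_le_of_ne (hΓ j₀) (Ne.symm hj₀)
    have hcardK : S.card = K := by
      by_contra hne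
      exact hj₀ (hout (lt_of_le_of_ne hSK hne) j₀ hj₀S)
    rcases S.eq_empty_or_nonempty with hSe | hSne
    · -- S empty hence K = 0 hence γ ≡ 0
      subst hSe
      simp only [Finset.card_empty] at hcardK
      have hK0 : (K:ℝ) = 0 := by rw [← hcardK]; simp
      have hγz : ∀ i, γ i = 0 := by
        intro i
        have h1 : ∑ j, γ j ≤ 0 := by rw [hK0] at hsum; exact hsum
        have h2 : ∀ j ∈ Finset.univ, 0 ≤ γ j := fun j _ => hγ0 j
        have h3 : ∑ j, γ j = 0 := le_antisymm h1 (Finset.sum_nonneg h2)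
        have := (Finset.sum_eq_zero_iff_of_nonneg h2).mp h3
        exact this i (Finset.mem_univ i)
      constructor
      · simp only [Finset.sum_empty]
        apply Finset.sum_nonpos
        intro i _
        rw [hγz i]; simp
      · intro _
        exact ⟨fun i hi => absurd hi (by simp), fun j _ => by rw [hγz j]; ring⟩
    · obtain ⟨i₀, hi₀S, hi₀min⟩ := Finset.exists_min_image S Γ hSne
      obtain ⟨j₁, hj₁S, hj₁max⟩ := Finset.exists_max_image Sᶜ Γ
        ⟨j₀, Finset.mem_compl.mpr hj₀S⟩
      set s : ℝ := Γ i₀ with hs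
      set t : ℝ := Γ j₁ with ht
      have hspos : 0 < s := hSpos i₀ hi₀S
      have hts : t < s := hgap i₀ hi₀S j₁ (Finset.mem_compl.mp hj₁S)
      have htnn : 0 ≤ t := hΓ j₁
      set A : ℝ := ∑ i ∈ S, (1 - γ i) with hA
      set B : ℝ := ∑ i ∈ Sᶜ, γ i with hB
      have hAnn : 0 ≤ A := Finset.sum_nonneg fun i _ => by linarith [hγ1 i]
      have hBnn : 0 ≤ B := Finset.sum_nonneg fun i _ => hγ0 i
      have hA_eq : A = (K:ℝ) - ∑ i ∈ S, γ i := by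
        rw [hA, Finset.sum_sub_distrib]
        simp [hcardK]
      have hBle : B ≤ (K:ℝ) - ∑ i ∈ S, γ i := by
        have := hsplitγ
        linarith
      have hBleA : B ≤ A := by rw [hA_eq]; exact hBle
      have ineq1 : s * A ≤ ∑ i ∈ S, Γ i * (1 - γ i) := by
        rw [hA, Finset.mul_sum]
        apply Finset.sum_le_sum
        intro i hi
        exact mul_le_mul_of_nonneg_right (hi₀min i hi) (by linarith [hγ1 i])
      have ineq2 : ∑ i ∈ Sᶜ, Γ i * γ i ≤ t * B := by
        rw [hB, Finset.mul_sum]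
        apply Finset.sum_le_sum
        intro i hi
        exact mul_le_mul_of_nonneg_right (hj₁max i hi) (hγ0 i)
      have hdiff : ∑ i ∈ S, Γ i - ∑ i ∈ S, Γ i * γ i = ∑ i ∈ S, Γ i * (1 - γ i) := by
        rw [← Finset.sum_sub_distrib]
        congr 1; ext i; ring
      have key : (s - t) * A ≤ ∑ i ∈ S, Γ i - ∑ i, Γ i * γ i := by
        have h1 : ∑ i, Γ i * γ i = ∑ i ∈ S, Γ i * γ i + ∑ i ∈ Sᶜ, Γ i * γ i :=
          hsplit.symm
        have h2 : t * B ≤ t * A := mul_le_mul_of_nonneg_left hBleA htnn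
        nlinarith [ineq1, ineq2]
      have hbound : ∑ i, Γ i * γ i ≤ ∑ i ∈ S, Γ i := by
        nlinarith [mul_nonneg (by linarith : (0:ℝ) ≤ s - t) hAnn]
      refine ⟨hbound, fun heq => ?_⟩
      have hA0 : A = 0 := by
        by_contra hA0
        have : 0 < A := lt_of_le_of_ne hAnn (Ne.symm hA0)
        nlinarith
      have hγS : ∀ i ∈ S, γ i = 1 := by
        have h2 : ∀ i ∈ S, 0 ≤ 1 - γ i := fun i _ => by linarith [hγ1 i]
        intro i hi
        have := (Finset.sum_eq_zero_iff_of_nonneg h2).mp hA0 i hi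
        linarith
      refine ⟨hγS, ?_⟩
      have hSeq : ∑ i ∈ S, Γ i * γ i = ∑ i ∈ S, Γ i := by
        apply Finset.sum_congr rfl
        intro i hi; rw [hγS i hi]; ring
      have hC0 : ∑ i ∈ Sᶜ, Γ i * γ i = 0 := by
        rw [← hsplit, hSeq] at heq
        linarith
      intro j hj
      exact (Finset.sum_eq_zero_iff_of_nonneg hCnonneg).mp hC0 j (Finset.mem_compl.mpr hj)

set_option maxHeartbeats 1600000 in
/-- **Bang-bang structure of the pointwise Hamiltonian maximizers.** With `Uᵢ = {u : Cᵢu ≤ 0}`,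
`Γᵢ = ‖P i‖` where `P i` is the metric projection of `y` onto `Uᵢ`, `K' = #{i : Γᵢ > 0}`,
`K'' = min{K, K'}`, suppose (i) `S` is a set of `K''` indices with `Γᵢ > 0` on `S` and
`Γᵢ > Γⱼ` for `i ∈ S`, `j ∉ S`, and (ii) whenever `Γⱼ = 0`, `⟪y, u⟫ < 0` for every
nonzero `u ∈ Uⱼ`. Then every maximizer `(uᵢ, γᵢ, σᵢ)` of `∑ᵢ ⟪y, uᵢ⟫` subject to
`uᵢ ∈ Uᵢ`, `‖uᵢ‖ ≤ σᵢ`, `γᵢρ₁ ≤ σᵢ ≤ γᵢρ₂`, `0 ≤ γᵢ ≤ 1`, `∑ᵢ γᵢ ≤ K` satisfies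
`uᵢ = (ρ₂/Γᵢ) • P i` for `i ∈ S` and `uⱼ = 0` for `j ∉ S`; in particular each control is
either `0` or of norm exactly `ρ₂` (bang-bang), so it is feasible for the non-convex
constraints `‖uᵢ‖ ∈ {0} ∪ [ρ₁, ρ₂]` with at most `K` inputs active. -/
theorem hamiltonian_maximizer_bang_bang {m M : ℕ} (K : ℕ) (hK : K ≤ M)
    (ρ₁ ρ₂ : ℝ) (hρ1 : 0 < ρ₁) (hρ12 : ρ₁ < ρ₂)
    (p : Fin M → ℕ) (C : ∀ i : Fin M, Matrix (Fin (p i)) (Fin m) ℝ)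
    (y : EuclideanSpace ℝ (Fin m))
    (P : Fin M → EuclideanSpace ℝ (Fin m))
    (hPU : ∀ i, ∀ j, (C i).mulVec (P i) j ≤ 0)
    (hP : ∀ i, ∀ z : EuclideanSpace ℝ (Fin m),
      (∀ j, (C i).mulVec z j ≤ 0) → dist y (P i) ≤ dist y z)
    (S : Finset (Fin M))
    (hcard : S.card = min K (Set.ncard {i : Fin M | 0 < ‖P i‖}))
    (hSpos : ∀ i ∈ S, 0 < ‖P i‖)
    (hgap : ∀ i ∈ S, ∀ j ∉ S, ‖P j‖ < ‖P i‖)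
    (hpolar : ∀ j : Fin M, ‖P j‖ = 0 →
      ∀ u : EuclideanSpace ℝ (Fin m), (∀ jj, (C j).mulVec u jj ≤ 0) → u ≠ 0 → ⟪y, u⟫ < 0)
    (u : Fin M → EuclideanSpace ℝ (Fin m)) (γ σ : Fin M → ℝ)
    (hfeas : (∀ i, (∀ j, (C i).mulVec (u i) j ≤ 0) ∧ ‖u i‖ ≤ σ i ∧
      γ i * ρ₁ ≤ σ i ∧ σ i ≤ γ i * ρ₂ ∧ 0 ≤ γ i ∧ γ i ≤ 1) ∧ (∑ i, γ i) ≤ (K : ℝ))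
    (hmax : ∀ (u' : Fin M → EuclideanSpace ℝ (Fin m)) (γ' σ' : Fin M → ℝ),
      ((∀ i, (∀ j, (C i).mulVec (u' i) j ≤ 0) ∧ ‖u' i‖ ≤ σ' i ∧
        γ' i * ρ₁ ≤ σ' i ∧ σ' i ≤ γ' i * ρ₂ ∧ 0 ≤ γ' i ∧ γ' i ≤ 1) ∧
        (∑ i, γ' i) ≤ (K : ℝ)) →
      ∑ i, ⟪y, u' i⟫ ≤ ∑ i, ⟪y, u i⟫) :
    (∀ i ∈ S, u i = (ρ₂ / ‖P i‖) • P i) ∧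
    (∀ j ∉ S, u j = 0) ∧
    (∀ i, u i = 0 ∨ ‖u i‖ = ρ₂) := by
  classical
  obtain ⟨hfe, hγsum⟩ := hfeas
  have hρ2pos : (0:ℝ) < ρ₂ := lt_trans hρ1 hρ12
  -- pointwise linearity of mulVec on EuclideanSpace
  have hmulsmul : ∀ i (t : ℝ) (a : EuclideanSpace ℝ (Fin m)) j,
      (C i).mulVec (t • a) j = t * (C i).mulVec a j := by
    intro i t a j
    simp only [Matrix.mulVec, dotProduct, Pi.smul_apply, smul_eq_mul,
      Finset.mul_sum]
    apply Finset.sum_congr rfl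
    intro k _
    ring
  have hmuladd : ∀ i (a b : EuclideanSpace ℝ (Fin m)) j,
      (C i).mulVec (a + b) j = (C i).mulVec a j + (C i).mulVec b j := by
    intro i a b j
    simp only [Matrix.mulVec, dotProduct, Pi.add_apply, mul_add,
      Finset.sum_add_distrib]
  -- projection facts
  have hfacts : ∀ i, (∀ w : EuclideanSpace ℝ (Fin m),
      (∀ j, (C i).mulVec w j ≤ 0) → ⟪y - P i, w⟫ ≤ 0) ∧ ⟪y, P i⟫ = ‖P i‖ ^ 2 := by
    intro i
    have := proj_cone_facts y (P i) {z : EuclideanSpace ℝ (Fin m) | ∀ j, (C i).mulVec z j ≤ 0}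
      (fun a b ha hb j => by rw [WithLp.ofLp_add, hmuladd]; exact add_nonpos (ha j) (hb j))
      (fun t a ht ha j => by
        rw [WithLp.ofLp_smul, hmulsmul]
        exact mul_nonpos_iff.mpr (Or.inl ⟨ht, ha j⟩))
      (hPU i) (fun z hz => hP i z hz)
    exact ⟨fun w hw => this.1 w hw, this.2⟩
  have F1 : ∀ i (w : EuclideanSpace ℝ (Fin m)),
      (∀ j, (C i).mulVec w j ≤ 0) → ⟪y, w⟫ ≤ ‖P i‖ * ‖w‖ := by
    intro i w hw
    have h1 := (hfacts i).1 w hw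
    have h2 := real_inner_le_norm (P i) w
    have h3 : ⟪y - P i, w⟫ = ⟪y, w⟫ - ⟪P i, w⟫ := inner_sub_left y (P i) w
    linarith
  -- candidate maximizer
  set u' : Fin M → EuclideanSpace ℝ (Fin m) :=
    fun i => if i ∈ S then (ρ₂ / ‖P i‖) • P i else 0 with hu'def
  set γ' : Fin M → ℝ := fun i => if i ∈ S then 1 else 0 with hγ'def
  set σ' : Fin M → ℝ := fun i => if i ∈ S then ρ₂ else 0 with hσ'def
  have hSK : S.card ≤ K := le_trans (le_of_eq hcard) (min_le_left _ _)
  have hfeas' : (∀ i, (∀ j, (C i).mulVec (u' i) j ≤ 0) ∧ ‖u' i‖ ≤ σ' i ∧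
      γ' i * ρ₁ ≤ σ' i ∧ σ' i ≤ γ' i * ρ₂ ∧ 0 ≤ γ' i ∧ γ' i ≤ 1) ∧
      (∑ i, γ' i) ≤ (K : ℝ) := by
    constructor
    · intro i
      by_cases hi : i ∈ S
      · have hΓ := hSpos i hi
        have hnorm : ‖u' i‖ = ρ₂ := by
          simp only [hu'def, if_pos hi, norm_smul, Real.norm_eq_abs,
            abs_of_pos (div_pos hρ2pos hΓ)]
          field_simp
        refine ⟨?_, ?_, ?_, ?_, ?_, ?_⟩
        · intro j
          simp only [hu'def, if_pos hi]
          rw [WithLp.ofLp_smul, hmulsmul]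
          exact mul_nonpos_iff.mpr (Or.inl ⟨(div_pos hρ2pos hΓ).le, hPU i j⟩)
        · rw [hnorm]; simp [hσ'def, if_pos hi]
        · simp [hσ'def, hγ'def, if_pos hi]; linarith
        · simp [hσ'def, hγ'def, if_pos hi]
        · simp [hγ'def, if_pos hi]
        · simp [hγ'def, if_pos hi]
      · refine ⟨?_, ?_, ?_, ?_, ?_, ?_⟩ <;>
          simp [hu'def, hγ'def, hσ'def, if_neg hi, Matrix.mulVec_zero, le_refl]
    · have : ∑ i, γ' i = (S.card : ℝ) := by
        simp only [hγ'def]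
        rw [Finset.sum_boole]
        have hfil : Finset.filter (fun x => x ∈ S) Finset.univ = S := by
          ext x; simp
        rw [hfil]
      rw [this]
      exact_mod_cast hSK
  -- value of the candidate
  have hval : ∑ i, ⟪y, u' i⟫ = ∑ i ∈ S, ρ₂ * ‖P i‖ := by
    have hterm : ∀ i, ⟪y, u' i⟫ = if i ∈ S then ρ₂ * ‖P i‖ else 0 := by
      intro i
      by_cases hi : i ∈ S
      · have hΓ := hSpos i hi
        simp only [hu'def, if_pos hi, real_inner_smul_right, (hfacts i).2]
        field_simp
      · simp [hu'def, if_neg hi]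
    rw [Finset.sum_congr rfl (fun i _ => hterm i)]
    rw [Finset.sum_ite_mem, Finset.univ_inter]
  have hmaxval : ∑ i ∈ S, ρ₂ * ‖P i‖ ≤ ∑ i, ⟪y, u i⟫ := by
    rw [← hval]; exact hmax u' γ' σ' hfeas'
  -- termwise upper bound
  have hterm : ∀ i, ⟪y, u i⟫ ≤ ‖P i‖ * γ i * ρ₂ := by
    intro i
    obtain ⟨hc, hn, _, hσ2, hγ0, _⟩ := hfe i
    have h1 := F1 i (u i) hc
    have h2 : ‖P i‖ * ‖u i‖ ≤ ‖P i‖ * σ i :=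
      mul_le_mul_of_nonneg_left hn (norm_nonneg _)
    have h3 : ‖P i‖ * σ i ≤ ‖P i‖ * (γ i * ρ₂) :=
      mul_le_mul_of_nonneg_left hσ2 (norm_nonneg _)
    calc ⟪y, u i⟫ ≤ ‖P i‖ * ‖u i‖ := h1
      _ ≤ ‖P i‖ * σ i := h2
      _ ≤ ‖P i‖ * (γ i * ρ₂) := h3
      _ = ‖P i‖ * γ i * ρ₂ := by ring
  -- the LP ingredient
  have hout : S.card < K → ∀ j ∉ S, ‖P j‖ = 0 := by
    intro hlt j hj
    set T : Finset (Fin M) := Finset.univ.filter (fun i => 0 < ‖P i‖) with hT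
    have hncard : Set.ncard {i : Fin M | 0 < ‖P i‖} = T.card := by
      rw [← Set.ncard_coe_finset]
      congr 1
      ext x; simp [hT]
    have hST : S.card = T.card := by
      rw [hncard] at hcard
      rcases min_cases K T.card with ⟨h1, _⟩ | ⟨h1, _⟩
      · rw [hcard, h1] at hlt; exact absurd hlt (lt_irrefl K)
      · rw [hcard, h1]
    have hsub : S ⊆ T := fun i hi => Finset.mem_filter.mpr ⟨Finset.mem_univ i, hSpos i hi⟩
    have hSeqT : S = T := Finset.eq_of_subset_of_card_le hsub (le_of_eq hST.symm)
    have : j ∉ T := hSeqT ▸ hj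
    have : ¬ 0 < ‖P j‖ := fun hpos => this (Finset.mem_filter.mpr ⟨Finset.mem_univ j, hpos⟩)
    exact le_antisymm (not_lt.mp this) (norm_nonneg (P j))
  have hLP := lp_bound K (fun i => ‖P i‖) γ S (fun i => norm_nonneg (P i)) hSpos hgap
    (fun i => (hfe i).2.2.2.2.1) (fun i => (hfe i).2.2.2.2.2) hγsum hSK hout
  -- equality chain
  have c1 : ∑ i, ⟪y, u i⟫ ≤ ∑ i, ‖P i‖ * γ i * ρ₂ :=
    Finset.sum_le_sum fun i _ => hterm i
  have c2 : ∑ i, ‖P i‖ * γ i * ρ₂ = (∑ i, ‖P i‖ * γ i) * ρ₂ := by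
    rw [Finset.sum_mul]
  have c3 : (∑ i, ‖P i‖ * γ i) * ρ₂ ≤ (∑ i ∈ S, ‖P i‖) * ρ₂ :=
    mul_le_mul_of_nonneg_right hLP.1 hρ2pos.le
  have c4 : (∑ i ∈ S, ‖P i‖) * ρ₂ = ∑ i ∈ S, ρ₂ * ‖P i‖ := by
    rw [Finset.sum_mul]
    apply Finset.sum_congr rfl
    intro i _; ring
  have hEq1 : ∑ i, ⟪y, u i⟫ = ∑ i, ‖P i‖ * γ i * ρ₂ := by linarith
  have hEq2 : ∑ i, ‖P i‖ * γ i = ∑ i ∈ S, ‖P i‖ := by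
    have h : (∑ i, ‖P i‖ * γ i) * ρ₂ = (∑ i ∈ S, ‖P i‖) * ρ₂ := by linarith
    exact mul_right_cancel₀ (ne_of_gt hρ2pos) h
  have htermeq : ∀ i, ⟪y, u i⟫ = ‖P i‖ * γ i * ρ₂ := by
    intro i
    exact (Finset.sum_eq_sum_iff_of_le (fun i _ => hterm i)).mp hEq1 i (Finset.mem_univ i)
  obtain ⟨hγ1S, hΓγ0⟩ := hLP.2 hEq2
  -- conclusions
  have main2 : ∀ j ∉ S, u j = 0 := by
    intro j hj
    have h0 : ‖P j‖ * γ j = 0 := hΓγ0 j hj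
    have hinner : ⟪y, u j⟫ = 0 := by rw [htermeq j, h0, zero_mul]
    rcases mul_eq_zero.mp h0 with hΓ0 | hγ0j
    · by_contra hne
      exact absurd hinner (ne_of_lt (hpolar j hΓ0 (u j) (hfe j).1 hne))
    · have hσ0 : σ j ≤ 0 := by
        have := (hfe j).2.2.2.1
        rw [hγ0j, zero_mul] at this
        exact this
      have hle : ‖u j‖ ≤ 0 := le_trans (hfe j).2.1 hσ0
      exact norm_le_zero_iff.mp hle
  have main1 : ∀ i ∈ S, u i = (ρ₂ / ‖P i‖) • P i := by
    intro i hi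
    obtain ⟨hc, hn, _, hσ2, _, _⟩ := hfe i
    have hΓpos := hSpos i hi
    have hΓne : ‖P i‖ ≠ 0 := ne_of_gt hΓpos
    have hγi : γ i = 1 := hγ1S i hi
    have h1 : ⟪y, u i⟫ = ‖P i‖ * ρ₂ := by rw [htermeq i, hγi]; ring
    have hub : ‖u i‖ ≤ ρ₂ := by
      have := hσ2; rw [hγi, one_mul] at this; linarith
    have h2 : ⟪y - P i, u i⟫ ≤ 0 := (hfacts i).1 (u i) hc
    have h3 : ⟪P i, u i⟫ ≤ ‖P i‖ * ‖u i‖ := real_inner_le_norm _ _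
    have h4 : ⟪y - P i, u i⟫ = ⟪y, u i⟫ - ⟪P i, u i⟫ := inner_sub_left y (P i) (u i)
    -- forces equality everywhere
    have h5 : ‖P i‖ * ρ₂ ≤ ‖P i‖ * ‖u i‖ := by linarith
    have hnorm : ‖u i‖ = ρ₂ := by
      have : ρ₂ ≤ ‖u i‖ := le_of_mul_le_mul_left h5 hΓpos
      linarith
    have h6 : ⟪P i, u i⟫ = ‖P i‖ * ‖u i‖ := by
      rw [hnorm]
      have h8 : ‖P i‖ * ρ₂ ≤ ⟪P i, u i⟫ := by linarith
      have h9 : ⟪P i, u i⟫ ≤ ‖P i‖ * ρ₂ := by rw [← hnorm] at h8 ⊢; exact h3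
      linarith
    have h7 : ‖u i‖ • P i = ‖P i‖ • u i := inner_eq_norm_mul_iff_real.mp h6
    rw [hnorm] at h7
    calc u i = (‖P i‖)⁻¹ • (‖P i‖ • u i) := (inv_smul_smul₀ hΓne _).symm
      _ = (‖P i‖)⁻¹ • (ρ₂ • P i) := by rw [← h7]
      _ = (ρ₂ / ‖P i‖) • P i := by rw [smul_smul, div_eq_inv_mul]
  refine ⟨main1, main2, ?_⟩
  intro i
  by_cases hi : i ∈ S
  · right
    rw [main1 i hi, norm_smul, Real.norm_eq_abs,
      abs_of_pos (div_pos hρ2pos (hSpos i hi))]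
    rw [div_mul_eq_mul_div, mul_div_assoc, div_self (ne_of_gt (hSpos i hi)), mul_one]
  · left; exact main2 i hi
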